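/- Let G be a group generated by two elements a and b, acting on ℝ by orientation-preserving homeomorphisms. Suppose there exist: words w₁, w₂ ∈ G, integers m, n ≥ 0 with m + n ≥ 1, r ∈ ℤ, k ≥ 0; an element w of G that is a product of nonnegative powers of a and b containing at least one b; and integers s, t, p, q with q ≠ 0 and p/q ≥ s + t, such that in G: (i) (w₁ a^m w₁⁻¹) b^{-r} (w₂⁻¹ a^n w₂) b^{r-k} = 1, (ii) a commutes with L := a^{-s} w a^{-t}, and (iii) a^p L^q = 1. Then the action of G has a global fixed point, i.e., there exists x ∈ ℝ fixed by every element of G. -/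

import Mathlib

namespace Stmt6Aux

lemma one_apply (x : ℝ) : (1 : ℝ ≃o ℝ) x = x := rfl
lemma mul_apply (σ τ : ℝ ≃o ℝ) (x : ℝ) : (σ * τ) x = σ (τ x) := rfl
lemma inv_apply (σ : ℝ ≃o ℝ) (x : ℝ) : (σ⁻¹) x = σ.symm x := rfl
lemma pow_succ_apply (σ : ℝ ≃o ℝ) (n : ℕ) (x : ℝ) :
    (σ ^ (n+1)) x = σ ((σ ^ n) x) := by rw [pow_succ']; rfl

lemma fix_pow (σ : ℝ ≃o ℝ) (x : ℝ) (h : σ x = x) (n : ℕ) : (σ ^ n) x = x := by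
  induction n with
  | zero => simp [one_apply]
  | succ n ih => rw [pow_succ_apply, ih, h]

lemma fix_inv (σ : ℝ ≃o ℝ) (x : ℝ) (h : σ x = x) : (σ⁻¹) x = x := by
  rw [inv_apply]; nth_rewrite 1 [← h]; exact σ.symm_apply_apply x

lemma fix_zpow (σ : ℝ ≃o ℝ) (x : ℝ) (h : σ x = x) (z : ℤ) : (σ ^ z) x = x := by
  rcases z with nn | nn
  · rw [Int.ofNat_eq_coe, zpow_natCast]; exact fix_pow σ x h nn
  · rw [zpow_negSucc]
    exact fix_inv _ x (fix_pow σ x h (nn+1))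

lemma pow_pos_pt (σ : ℝ ≃o ℝ) (x : ℝ) (h : x < σ x) (n : ℕ) : x < (σ ^ (n+1)) x := by
  induction n with
  | zero => simpa [pow_succ_apply, one_apply] using h
  | succ n ih =>
    rw [pow_succ_apply]
    exact lt_trans h (σ.strictMono ih)

lemma pow_neg_pt (σ : ℝ ≃o ℝ) (x : ℝ) (h : σ x < x) (n : ℕ) : (σ ^ (n+1)) x < x := by
  induction n with
  | zero => simpa [pow_succ_apply, one_apply] using h
  | succ n ih =>
    rw [pow_succ_apply]
    exact lt_trans (σ.strictMono ih) h

lemma pow_le_pt (σ : ℝ ≃o ℝ) (x : ℝ) (h : x ≤ σ x) (n : ℕ) : x ≤ (σ ^ n) x := by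
  induction n with
  | zero => simp [one_apply]
  | succ n ih => rw [pow_succ_apply]; exact le_trans h (σ.monotone ih)

lemma zpow_pos_pt (σ : ℝ ≃o ℝ) (x : ℝ) (h : x < σ x) (z : ℤ) (hz : 1 ≤ z) :
    x < (σ ^ z) x := by
  have h1 : z = ((z.toNat - 1 : ℕ) + 1 : ℕ) := by omega
  rw [h1, zpow_natCast]
  exact pow_pos_pt σ x h _

lemma zpow_neg_pt' (σ : ℝ ≃o ℝ) (x : ℝ) (h : σ x < x) (z : ℤ) (hz : 1 ≤ z) :
    (σ ^ z) x < x := by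
  have h1 : z = ((z.toNat - 1 : ℕ) + 1 : ℕ) := by omega
  rw [h1, zpow_natCast]
  exact pow_neg_pt σ x h _

lemma inv_lt_pt (σ : ℝ ≃o ℝ) (x : ℝ) (h : x < σ x) : (σ⁻¹) x < x := by
  have h2 := σ.symm.strictMono h
  rw [σ.symm_apply_apply] at h2
  exact h2

lemma inv_gt_pt (σ : ℝ ≃o ℝ) (x : ℝ) (h : σ x < x) : x < (σ⁻¹) x := by
  have h2 := σ.symm.strictMono h
  rw [σ.symm_apply_apply] at h2
  exact h2

lemma zpow_neg_pt (σ : ℝ ≃o ℝ) (x : ℝ) (h : x < σ x) (z : ℤ) (hz : z ≤ -1) :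
    (σ ^ z) x < x := by
  have h1 : σ ^ z = (σ⁻¹) ^ (-z) := by
    rw [inv_zpow, ← zpow_neg, neg_neg]
  rw [h1]
  exact zpow_neg_pt' σ⁻¹ x (inv_lt_pt σ x h) (-z) (by omega)

lemma zpow_pos_pt' (σ : ℝ ≃o ℝ) (x : ℝ) (h : σ x < x) (z : ℤ) (hz : z ≤ -1) :
    x < (σ ^ z) x := by
  have h1 : σ ^ z = (σ⁻¹) ^ (-z) := by
    rw [inv_zpow, ← zpow_neg, neg_neg]
  rw [h1]
  exact zpow_pos_pt σ⁻¹ x (inv_gt_pt σ x h) (-z) (by omega)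

lemma fix_of_zpow_fix (σ : ℝ ≃o ℝ) (x : ℝ) (q : ℤ) (hq : q ≠ 0)
    (h : (σ ^ q) x = x) : σ x = x := by
  rcases lt_trichotomy (σ x) x with hlt | heq | hgt
  · rcases hq.lt_or_gt with h1 | h1
    · exact absurd h (ne_of_gt (zpow_pos_pt' σ x hlt q (by omega)))
    · exact absurd h (ne_of_lt (zpow_neg_pt' σ x hlt q (by omega)))
  · exact heq
  · rcases hq.lt_or_gt with h1 | h1
    · exact absurd h (ne_of_lt (zpow_neg_pt σ x hgt q (by omega)))
    · exact absurd h (ne_of_gt (zpow_pos_pt σ x hgt q (by omega)))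

lemma sign_trichotomy (σ : ℝ ≃o ℝ) :
    (∃ x, σ x = x) ∨ (∀ x, x < σ x) ∨ (∀ x, σ x < x) := by
  by_contra hcon
  push_neg at hcon
  obtain ⟨hfix, ⟨x1, hx1⟩, ⟨x2, hx2⟩⟩ := hcon
  have hcont : Continuous (fun x : ℝ => σ x - x) :=
    (OrderIso.continuous σ).sub continuous_id
  have h1 : σ x1 - x1 ≤ 0 := by linarith
  have h2 : 0 ≤ σ x2 - x2 := by linarith
  have h0 : (0 : ℝ) ∈ Set.uIcc (σ x1 - x1) (σ x2 - x2) := by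
    rw [Set.mem_uIcc]; left; exact ⟨h1, h2⟩
  have := intermediate_value_uIcc (a := x1) (b := x2) hcont.continuousOn h0
  obtain ⟨x, _, hx⟩ := this
  simp only at hx
  exact hfix x (by linarith)

lemma pow_ge_pt (σ : ℝ ≃o ℝ) (x : ℝ) (h : σ x ≤ x) (n : ℕ) : (σ ^ n) x ≤ x := by
  induction n with
  | zero => simp [one_apply]
  | succ n ih => rw [pow_succ_apply]; exact le_trans (σ.monotone ih) h

lemma word_le (x0 : ℝ) (l : List (ℝ ≃o ℝ))
    (h : ∀ σ ∈ l, ∀ y, x0 ≤ y → x0 ≤ σ y) : x0 ≤ l.prod x0 := by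
  induction l with
  | nil => rw [List.prod_nil, one_apply]
  | cons σ t ih =>
    rw [List.prod_cons, mul_apply]
    exact h σ List.mem_cons_self _ (ih (fun ρ hρ => h ρ (List.mem_cons_of_mem σ hρ)))

lemma word_lt (x0 : ℝ) (l : List (ℝ ≃o ℝ))
    (h : ∀ σ ∈ l, ∀ y, x0 ≤ y → x0 ≤ σ y)
    (hstrict : ∀ σ ∈ l, ∀ y, x0 < y → x0 < σ y)
    (τ : ℝ ≃o ℝ) (hτ : τ ∈ l) (hτs : ∀ y, x0 ≤ y → x0 < τ y) :
    x0 < l.prod x0 := by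
  induction l with
  | nil => cases hτ
  | cons σ t ih =>
    rw [List.prod_cons, mul_apply]
    rcases List.mem_cons.mp hτ with h1 | h1
    · rw [← h1]
      exact hτs _ (word_le x0 t (fun ρ hρ => h ρ (List.mem_cons_of_mem σ hρ)))
    · exact hstrict σ List.mem_cons_self _
        (ih (fun ρ hρ => h ρ (List.mem_cons_of_mem σ hρ))
            (fun ρ hρ => hstrict ρ (List.mem_cons_of_mem σ hρ)) h1)

lemma word_ge (x0 : ℝ) (l : List (ℝ ≃o ℝ))
    (h : ∀ σ ∈ l, ∀ y, y ≤ x0 → σ y ≤ x0) : l.prod x0 ≤ x0 := by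
  induction l with
  | nil => rw [List.prod_nil, one_apply]
  | cons σ t ih =>
    rw [List.prod_cons, mul_apply]
    exact h σ List.mem_cons_self _ (ih (fun ρ hρ => h ρ (List.mem_cons_of_mem σ hρ)))

lemma word_gt (x0 : ℝ) (l : List (ℝ ≃o ℝ))
    (h : ∀ σ ∈ l, ∀ y, y ≤ x0 → σ y ≤ x0)
    (hstrict : ∀ σ ∈ l, ∀ y, y < x0 → σ y < x0)
    (τ : ℝ ≃o ℝ) (hτ : τ ∈ l) (hτs : ∀ y, y ≤ x0 → τ y < x0) :
    l.prod x0 < x0 := by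
  induction l with
  | nil => cases hτ
  | cons σ t ih =>
    rw [List.prod_cons, mul_apply]
    rcases List.mem_cons.mp hτ with h1 | h1
    · rw [← h1]
      exact hτs _ (word_ge x0 t (fun ρ hρ => h ρ (List.mem_cons_of_mem σ hρ)))
    · exact hstrict σ List.mem_cons_self _
        (ih (fun ρ hρ => h ρ (List.mem_cons_of_mem σ hρ))
            (fun ρ hρ => hstrict ρ (List.mem_cons_of_mem σ hρ)) h1)

lemma conj_le (τ σ : ℝ ≃o ℝ) (h : ∀ y, y ≤ σ y) (x : ℝ) :
    x ≤ (τ * σ * τ⁻¹) x := by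
  have he : (τ * σ * τ⁻¹) x = τ (σ (τ.symm x)) := rfl
  rw [he]
  calc x = τ (τ.symm x) := (τ.apply_symm_apply x).symm
  _ ≤ τ (σ (τ.symm x)) := τ.monotone (h _)

lemma conj_lt (τ σ : ℝ ≃o ℝ) (h : ∀ y, y < σ y) (x : ℝ) :
    x < (τ * σ * τ⁻¹) x := by
  have he : (τ * σ * τ⁻¹) x = τ (σ (τ.symm x)) := rfl
  rw [he]
  calc x = τ (τ.symm x) := (τ.apply_symm_apply x).symm
  _ < τ (σ (τ.symm x)) := τ.strictMono (h _)

lemma conj_ge (τ σ : ℝ ≃o ℝ) (h : ∀ y, σ y ≤ y) (x : ℝ) :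
    (τ * σ * τ⁻¹) x ≤ x := by
  have he : (τ * σ * τ⁻¹) x = τ (σ (τ.symm x)) := rfl
  rw [he]
  calc τ (σ (τ.symm x)) ≤ τ (τ.symm x) := τ.monotone (h _)
  _ = x := τ.apply_symm_apply x

lemma conj_gt (τ σ : ℝ ≃o ℝ) (h : ∀ y, σ y < y) (x : ℝ) :
    (τ * σ * τ⁻¹) x < x := by
  have he : (τ * σ * τ⁻¹) x = τ (σ (τ.symm x)) := rfl
  rw [he]
  calc τ (σ (τ.symm x)) < τ (τ.symm x) := τ.strictMono (h _)
  _ = x := τ.apply_symm_apply x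

lemma contra_up (f H : ℝ ≃o ℝ) (e q : ℤ) (hEq : H ^ q = f ^ e) (x : ℝ)
    (hf : x < f x) (hH : x < H x)
    (hqe : (0 < q ∧ e ≤ 0) ∨ (q < 0 ∧ 0 ≤ e)) : False := by
  rcases hqe with ⟨hq1, he1⟩ | ⟨hq1, he1⟩
  · have h1 : x < (H ^ q) x := zpow_pos_pt H x hH q (by omega)
    have h2 : (f ^ e) x ≤ x := by
      rcases he1.lt_or_eq with h3 | h3
      · exact le_of_lt (zpow_neg_pt f x hf e (by omega))
      · rw [h3]; simp [one_apply]
    rw [hEq] at h1; linarith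
  · have h1 : (H ^ q) x < x := zpow_neg_pt H x hH q (by omega)
    have h2 : x ≤ (f ^ e) x := by
      rcases he1.lt_or_eq with h3 | h3
      · exact le_of_lt (zpow_pos_pt f x hf e (by omega))
      · rw [← h3]; simp [one_apply]
    rw [hEq] at h1; linarith

lemma contra_dn (f H : ℝ ≃o ℝ) (e q : ℤ) (hEq : H ^ q = f ^ e) (x : ℝ)
    (hf : f x < x) (hH : H x < x)
    (hqe : (0 < q ∧ e ≤ 0) ∨ (q < 0 ∧ 0 ≤ e)) : False := by
  rcases hqe with ⟨hq1, he1⟩ | ⟨hq1, he1⟩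
  · have h1 : (H ^ q) x < x := zpow_neg_pt' H x hH q (by omega)
    have h2 : x ≤ (f ^ e) x := by
      rcases he1.lt_or_eq with h3 | h3
      · exact le_of_lt (zpow_pos_pt' f x hf e (by omega))
      · rw [h3]; simp [one_apply]
    rw [hEq] at h1; linarith
  · have h1 : x < (H ^ q) x := zpow_pos_pt' H x hH q (by omega)
    have h2 : (f ^ e) x ≤ x := by
      rcases he1.lt_or_eq with h3 | h3
      · exact le_of_lt (zpow_neg_pt' f x hf e (by omega))
      · rw [← h3]; simp [one_apply]
    rw [hEq] at h1; linarith

end Stmt6Aux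

open Stmt6Aux in
/-- Under the generalized Baumslag-Solitar relator, the commuting
meridian/longitude relations and `a^p L^q = 1` with `q ≠ 0` and `p/q ≥ s + t`,
every action of `G = ⟨a, b⟩` on `ℝ` by orientation-preserving homeomorphisms
has a global fixed point. -/
theorem stmt6 {G : Type*} [Group G] (a b : G)
    (hgen : Subgroup.closure ({a, b} : Set G) = ⊤)
    (Φ : G →* (ℝ ≃o ℝ))
    (w₁ w₂ : G) (m n : ℕ) (hmn : 1 ≤ m + n) (r k : ℤ) (hk : 0 ≤ k)
    (w : G) (l : List G) (hl : ∀ c ∈ l, c = a ∨ c = b) (hbl : b ∈ l)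
    (hw : w = l.prod)
    (s t p q : ℤ) (hq : q ≠ 0) (hpq : (s + t : ℚ) ≤ (p : ℚ) / (q : ℚ))
    (L : G) (hL : L = a ^ (-s) * w * a ^ (-t))
    (hrel₁ : (w₁ * a ^ m * w₁⁻¹) * b ^ (-r) * (w₂⁻¹ * a ^ n * w₂) * b ^ (r - k) = 1)
    (hrel₂ : a * L = L * a)
    (hrel₃ : a ^ p * L ^ q = 1) :
    ∃ x : ℝ, ∀ g : G, Φ g x = x := by
  classical
  -- group-theoretic consequences
  have hbk : (w₁ * a ^ m * w₁⁻¹) * (b ^ (-r) * (w₂⁻¹ * a ^ n * w₂) * (b ^ (-r))⁻¹) = b ^ k := by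
    have h2 : (w₁ * a ^ m * w₁⁻¹) * (b ^ (-r) * (w₂⁻¹ * a ^ n * w₂) * (b ^ (-r))⁻¹)
        = ((w₁ * a ^ m * w₁⁻¹) * b ^ (-r) * (w₂⁻¹ * a ^ n * w₂) * b ^ (r - k)) * b ^ k := by
      group
    rw [h2, hrel₁, one_mul]
  have hc : Commute a L := hrel₂
  have hLq : L ^ q = a ^ (-p) := by rw [zpow_neg]; exact eq_inv_of_mul_eq_one_right hrel₃
  have hHq : (a ^ t * w * a ^ (-t)) ^ q = a ^ ((s+t)*q - p) := by
    have h1 : a ^ t * w * a ^ (-t) = a ^ (s+t) * L := by rw [hL]; group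
    calc (a ^ t * w * a ^ (-t)) ^ q = (a ^ (s+t) * L) ^ q := by rw [h1]
    _ = (a ^ (s+t)) ^ q * L ^ q := (hc.zpow_left (s+t)).mul_zpow q
    _ = a ^ ((s+t)*q) * a ^ (-p) := by rw [← zpow_mul, hLq]
    _ = a ^ ((s+t)*q - p) := by rw [← zpow_add, sub_eq_add_neg]
  have hqe : (0 < q ∧ (s+t)*q - p ≤ 0) ∨ (q < 0 ∧ 0 ≤ (s+t)*q - p) := by
    rcases hq.lt_or_gt with h1 | h1
    · right
      refine ⟨h1, ?_⟩
      have hq' : ((q:ℚ)) < 0 := by exact_mod_cast h1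
      rw [le_div_iff_of_neg hq'] at hpq
      have h2 : (p : ℚ) ≤ (((s+t)*q : ℤ) : ℚ) := by push_cast; push_cast at hpq; linarith
      have h3 : p ≤ (s+t)*q := by exact_mod_cast h2
      omega
    · left
      refine ⟨h1, ?_⟩
      have hq' : (0:ℚ) < (q:ℚ) := by exact_mod_cast h1
      rw [le_div_iff₀ hq'] at hpq
      have h2 : (((s+t)*q : ℤ) : ℚ) ≤ (p:ℚ) := by push_cast; push_cast at hpq; linarith
      have h3 : (s+t)*q ≤ p := by exact_mod_cast h2
      omega
  have hΦH : Φ (a ^ t * w * a ^ (-t)) = ((Φ a) ^ t) * (Φ w) * ((Φ a) ^ t)⁻¹ := by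
    simp [map_mul, map_zpow, zpow_neg]
  have hΦHq : (((Φ a) ^ t) * (Φ w) * ((Φ a) ^ t)⁻¹) ^ q = (Φ a) ^ ((s+t)*q - p) := by
    rw [← hΦH, ← map_zpow, hHq, map_zpow]
  have hΦbk : Φ (b ^ k) =
      (Φ w₁ * (Φ a) ^ m * (Φ w₁)⁻¹) *
        (Φ (b ^ (-r)) * ((Φ w₂)⁻¹ * (Φ a) ^ n * Φ w₂) * (Φ (b ^ (-r)))⁻¹) := by
    rw [← hbk]; simp [map_mul, map_inv, map_pow]
  have hwmem : ∀ σ ∈ l.map Φ, σ = Φ a ∨ σ = Φ b := by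
    intro σ hσ
    obtain ⟨c, hc1, hc2⟩ := List.mem_map.mp hσ
    rcases hl c hc1 with h1 | h1
    · left; rw [← hc2, h1]
    · right; rw [← hc2, h1]
  have hgmem : Φ b ∈ l.map Φ := List.mem_map_of_mem hbl
  have hΦw : Φ w = (l.map Φ).prod := by rw [hw]; exact map_list_prod Φ l
  -- Step A : Φ a has a fixed point
  have hfix : ∃ x, Φ a x = x := by
    rcases sign_trichotomy (Φ a) with h | hup | hdn
    · exact h
    · exfalso
      have hk1 : ∀ x, x < Φ (b ^ k) x := by
        intro x
        rw [hΦbk, mul_apply]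
        have hD : ∀ y, y ≤ (Φ (b ^ (-r)) * ((Φ w₂)⁻¹ * (Φ a) ^ n * Φ w₂) * (Φ (b ^ (-r)))⁻¹) y := by
          intro y
          apply conj_le
          intro z
          have he : (Φ w₂)⁻¹ * (Φ a) ^ n * Φ w₂ = (Φ w₂)⁻¹ * (Φ a) ^ n * ((Φ w₂)⁻¹)⁻¹ := by
            rw [inv_inv]
          rw [he]
          apply conj_le
          intro u
          exact pow_le_pt (Φ a) u (le_of_lt (hup u)) n
        have hC : ∀ y, y ≤ (Φ w₁ * (Φ a) ^ m * (Φ w₁)⁻¹) y := by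
          intro y
          apply conj_le
          intro u
          exact pow_le_pt (Φ a) u (le_of_lt (hup u)) m
        rcases Nat.lt_or_ge 0 m with hm | hm
        · have hCs : ∀ y, y < (Φ w₁ * (Φ a) ^ m * (Φ w₁)⁻¹) y := by
            intro y
            apply conj_lt
            intro u
            have hmm2 : m = (m - 1) + 1 := by omega
            rw [hmm2]
            exact pow_pos_pt (Φ a) u (hup u) _
          exact lt_of_le_of_lt (hD x) (hCs _)
        · have hn : 0 < n := by omega
          have hDs : ∀ y, y < (Φ (b ^ (-r)) * ((Φ w₂)⁻¹ * (Φ a) ^ n * Φ w₂) * (Φ (b ^ (-r)))⁻¹) y := by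
            intro y
            apply conj_lt
            intro z
            have he : (Φ w₂)⁻¹ * (Φ a) ^ n * Φ w₂ = (Φ w₂)⁻¹ * (Φ a) ^ n * ((Φ w₂)⁻¹)⁻¹ := by
              rw [inv_inv]
            rw [he]
            apply conj_lt
            intro u
            have hnn2 : n = (n - 1) + 1 := by omega
            rw [hnn2]
            exact pow_pos_pt (Φ a) u (hup u) _
          exact lt_of_lt_of_le (hDs x) (hC _)
      have hk0 : k ≠ 0 := by
        intro h0
        have h2 := hk1 0
        rw [h0] at h2
        simp [map_one, one_apply] at h2
      have hk2 : 1 ≤ k := by omega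
      have hgup : ∀ x, x < Φ b x := by
        rcases sign_trichotomy (Φ b) with ⟨x1, hx1⟩ | h2 | h2
        · exfalso
          have h3 := hk1 x1
          rw [map_zpow, fix_zpow (Φ b) x1 hx1 k] at h3
          exact lt_irrefl _ h3
        · exact h2
        · exfalso
          have h3 := hk1 0
          rw [map_zpow] at h3
          have h4 := zpow_neg_pt' (Φ b) 0 (h2 0) k hk2
          linarith
      have hwup : ∀ x, x < Φ w x := by
        intro x
        rw [hΦw]
        refine word_lt x (l.map Φ) ?_ ?_ (Φ b) hgmem ?_
        · intro σ hσ y hy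
          rcases hwmem σ hσ with h1 | h1 <;> rw [h1]
          · exact le_of_lt (lt_of_le_of_lt hy (hup y))
          · exact le_of_lt (lt_of_le_of_lt hy (hgup y))
        · intro σ hσ y hy
          rcases hwmem σ hσ with h1 | h1 <;> rw [h1]
          · exact lt_trans hy (hup y)
          · exact lt_trans hy (hgup y)
        · intro y hy
          exact lt_of_le_of_lt hy (hgup y)
      have hHup : ∀ x, x < (((Φ a) ^ t) * (Φ w) * ((Φ a) ^ t)⁻¹) x := fun x =>
        conj_lt _ _ hwup x
      exact contra_up (Φ a) _ ((s+t)*q - p) q hΦHq 0 (hup 0) (hHup 0) hqe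
    · exfalso
      have hk1 : ∀ x, Φ (b ^ k) x < x := by
        intro x
        rw [hΦbk, mul_apply]
        have hD : ∀ y, (Φ (b ^ (-r)) * ((Φ w₂)⁻¹ * (Φ a) ^ n * Φ w₂) * (Φ (b ^ (-r)))⁻¹) y ≤ y := by
          intro y
          apply conj_ge
          intro z
          have he : (Φ w₂)⁻¹ * (Φ a) ^ n * Φ w₂ = (Φ w₂)⁻¹ * (Φ a) ^ n * ((Φ w₂)⁻¹)⁻¹ := by
            rw [inv_inv]
          rw [he]
          apply conj_ge
          intro u
          exact pow_ge_pt (Φ a) u (le_of_lt (hdn u)) n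
        have hC : ∀ y, (Φ w₁ * (Φ a) ^ m * (Φ w₁)⁻¹) y ≤ y := by
          intro y
          apply conj_ge
          intro u
          exact pow_ge_pt (Φ a) u (le_of_lt (hdn u)) m
        rcases Nat.lt_or_ge 0 m with hm | hm
        · have hCs : ∀ y, (Φ w₁ * (Φ a) ^ m * (Φ w₁)⁻¹) y < y := by
            intro y
            apply conj_gt
            intro u
            have hmm2 : m = (m - 1) + 1 := by omega
            rw [hmm2]
            exact pow_neg_pt (Φ a) u (hdn u) _
          exact lt_of_lt_of_le (hCs _) (hD x)
        · have hn : 0 < n := by omega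
          have hDs : ∀ y, (Φ (b ^ (-r)) * ((Φ w₂)⁻¹ * (Φ a) ^ n * Φ w₂) * (Φ (b ^ (-r)))⁻¹) y < y := by
            intro y
            apply conj_gt
            intro z
            have he : (Φ w₂)⁻¹ * (Φ a) ^ n * Φ w₂ = (Φ w₂)⁻¹ * (Φ a) ^ n * ((Φ w₂)⁻¹)⁻¹ := by
              rw [inv_inv]
            rw [he]
            apply conj_gt
            intro u
            have hnn2 : n = (n - 1) + 1 := by omega
            rw [hnn2]
            exact pow_neg_pt (Φ a) u (hdn u) _
          exact lt_of_le_of_lt (hC _) (hDs x)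
      have hk0 : k ≠ 0 := by
        intro h0
        have h2 := hk1 0
        rw [h0] at h2
        simp [map_one, one_apply] at h2
      have hk2 : 1 ≤ k := by omega
      have hgdn : ∀ x, Φ b x < x := by
        rcases sign_trichotomy (Φ b) with ⟨x1, hx1⟩ | h2 | h2
        · exfalso
          have h3 := hk1 x1
          rw [map_zpow, fix_zpow (Φ b) x1 hx1 k] at h3
          exact lt_irrefl _ h3
        · exfalso
          have h3 := hk1 0
          rw [map_zpow] at h3
          have h4 := zpow_pos_pt (Φ b) 0 (h2 0) k hk2
          linarith
        · exact h2
      have hwdn : ∀ x, Φ w x < x := by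
        intro x
        rw [hΦw]
        refine word_gt x (l.map Φ) ?_ ?_ (Φ b) hgmem ?_
        · intro σ hσ y hy
          rcases hwmem σ hσ with h1 | h1 <;> rw [h1]
          · exact le_of_lt (lt_of_lt_of_le (hdn y) hy)
          · exact le_of_lt (lt_of_lt_of_le (hgdn y) hy)
        · intro σ hσ y hy
          rcases hwmem σ hσ with h1 | h1 <;> rw [h1]
          · exact lt_trans (hdn y) hy
          · exact lt_trans (hgdn y) hy
        · intro y hy
          exact lt_of_lt_of_le (hgdn y) hy
      have hHdn : ∀ x, (((Φ a) ^ t) * (Φ w) * ((Φ a) ^ t)⁻¹) x < x := fun x =>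
        conj_gt _ _ hwdn x
      exact contra_dn (Φ a) _ ((s+t)*q - p) q hΦHq 0 (hdn 0) (hHdn 0) hqe
  -- Step B : the fixed point of Φ a is fixed by Φ b
  obtain ⟨x0, hx0⟩ := hfix
  have hfz : ∀ z : ℤ, ((Φ a) ^ z) x0 = x0 := fix_zpow (Φ a) x0 hx0
  have hLfix : Φ L x0 = x0 := by
    apply fix_of_zpow_fix (Φ L) x0 q hq
    have h1 : (Φ L) ^ q = (Φ a) ^ (-p) := by rw [← map_zpow, hLq, map_zpow]
    rw [h1]
    exact hfz (-p)
  have hwfix : Φ w x0 = x0 := by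
    have h1 : Φ L x0 = ((Φ a) ^ (-s)) ((Φ w) (((Φ a) ^ (-t)) x0)) := by
      rw [hL, map_mul, map_mul, map_zpow, map_zpow]
      rfl
    rw [h1, hfz (-t)] at hLfix
    have h2 : Φ w x0 = ((Φ a) ^ s) (((Φ a) ^ (-s)) (Φ w x0)) := by
      rw [← mul_apply, ← zpow_add]
      have h3 : s + -s = 0 := by ring
      rw [h3, zpow_zero, one_apply]
    calc Φ w x0 = ((Φ a) ^ s) (((Φ a) ^ (-s)) (Φ w x0)) := h2
    _ = ((Φ a) ^ s) x0 := by rw [hLfix]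
    _ = x0 := hfz s
  have hbfix : Φ b x0 = x0 := by
    by_contra hne
    rcases lt_or_gt_of_ne hne with hlt | hgt
    · have h5 : (l.map Φ).prod x0 < x0 := by
        refine word_gt x0 (l.map Φ) ?_ ?_ (Φ b) hgmem ?_
        · intro σ hσ y hy
          rcases hwmem σ hσ with h1 | h1 <;> rw [h1]
          · calc Φ a y ≤ Φ a x0 := (Φ a).monotone hy
            _ = x0 := hx0
          · calc Φ b y ≤ Φ b x0 := (Φ b).monotone hy
            _ ≤ x0 := le_of_lt hlt
        · intro σ hσ y hy
          rcases hwmem σ hσ with h1 | h1 <;> rw [h1]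
          · calc Φ a y < Φ a x0 := (Φ a).strictMono hy
            _ = x0 := hx0
          · calc Φ b y < Φ b x0 := (Φ b).strictMono hy
            _ < x0 := hlt
        · intro y hy
          calc Φ b y ≤ Φ b x0 := (Φ b).monotone hy
          _ < x0 := hlt
      rw [← hΦw, hwfix] at h5
      exact lt_irrefl _ h5
    · have h5 : x0 < (l.map Φ).prod x0 := by
        refine word_lt x0 (l.map Φ) ?_ ?_ (Φ b) hgmem ?_
        · intro σ hσ y hy
          rcases hwmem σ hσ with h1 | h1 <;> rw [h1]
          · calc x0 = Φ a x0 := hx0.symm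
            _ ≤ Φ a y := (Φ a).monotone hy
          · calc x0 ≤ Φ b x0 := le_of_lt hgt
            _ ≤ Φ b y := (Φ b).monotone hy
        · intro σ hσ y hy
          rcases hwmem σ hσ with h1 | h1 <;> rw [h1]
          · calc x0 = Φ a x0 := hx0.symm
            _ < Φ a y := (Φ a).strictMono hy
          · calc x0 < Φ b x0 := hgt
            _ < Φ b y := (Φ b).strictMono hy
        · intro y hy
          calc x0 < Φ b x0 := hgt
          _ ≤ Φ b y := (Φ b).monotone hy
      rw [← hΦw, hwfix] at h5
      exact lt_irrefl _ h5
  -- Step C : generation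
  refine ⟨x0, fun g0 => ?_⟩
  have hmem : g0 ∈ Subgroup.closure ({a, b} : Set G) := by
    rw [hgen]; exact Subgroup.mem_top g0
  refine Subgroup.closure_induction ?_ ?_ ?_ ?_ hmem
  · intro x hx
    rcases hx with h1 | h1
    · rw [h1]; exact hx0
    · rw [h1]; exact hbfix
  · rw [map_one]; rfl
  · intro x y _ _ hx hy
    rw [map_mul, mul_apply, hy, hx]
  · intro x _ hx
    rw [map_inv]
    exact fix_inv _ x0 hx
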